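/- Let m, k, l, N be positive integers with m > 1, k ∤ m and 1 ≤ l < k, and let Γ_0 denote the multiplicity of 0 as a root of W_N^{[m,k,l]}(z). Then m divides Γ − Γ_0, and there exists a monic polynomial Q ∈ ℂ[w] with Q(0) ≠ 0 such that W_N^{[m,k,l]}(z) = z^{Γ_0} · Q(z^m) for all z. -/

import Mathlib

open scoped BigOperators

/-- `pPoly m j` is the polynomial `p_j^{[m]}(z) = ∑_{i=0}^{⌊j/m⌋} z^{j-im}/(i!(j-im)!)`
for `j ≥ 0`, and `0` for `j < 0`. -/
noncomputable def pPoly (m : ℕ) : ℤ → Polynomial ℂ := fun j =>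
  if 0 ≤ j then
    ∑ i ∈ Finset.range (j.toNat / m + 1),
      Polynomial.C (((Nat.factorial i * Nat.factorial (j.toNat - i * m) : ℕ) : ℂ))⁻¹ *
        Polynomial.X ^ (j.toNat - i * m)
  else 0

/-- The normalizing constant `c_N^{[m,k,l]} = k^{-N(N-1)/2} ∏_{i=1}^{N} (k(i-1)+l)!/(i-1)!`. -/
noncomputable def cConst (k l N : ℕ) : ℂ :=
  ((k : ℂ) ^ (N * (N - 1) / 2))⁻¹ *
    ∏ i ∈ Finset.range N, ((Nat.factorial (k * i + l) : ℂ) / ((Nat.factorial i : ℕ) : ℂ))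

/-- The generalized Wronskian–Hermite polynomial
`W_N^{[m,k,l]}(z) = c_N^{[m,k,l]} · det_{1≤i,j≤N} ( p^{[m]}_{k(j-1)+l-i+1}(z) )`. -/
noncomputable def WPoly (m k l N : ℕ) : Polynomial ℂ :=
  Polynomial.C (cConst k l N) *
    Matrix.det (Matrix.of fun i j : Fin N =>
      pPoly m (((k * (j : ℕ) + l : ℕ) : ℤ) - ((i : ℕ) : ℤ)))

open Polynomial Finset

lemma pPoly_natCast (m j : ℕ) : pPoly m (j : ℤ) =
    ∑ i ∈ Finset.range (j / m + 1),
      Polynomial.C (((Nat.factorial i * Nat.factorial (j - i * m) : ℕ) : ℂ))⁻¹ *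
        Polynomial.X ^ (j - i * m) := by
  simp [pPoly]

lemma pPoly_neg (m : ℕ) {j : ℤ} (h : j < 0) : pPoly m j = 0 := if_neg (not_le.2 h)

lemma pPoly_natDegree_le (m j : ℕ) : (pPoly m (j : ℤ)).natDegree ≤ j := by
  rw [pPoly_natCast]
  refine Polynomial.natDegree_sum_le_of_forall_le _ _ (fun i hi => ?_)
  exact (Polynomial.natDegree_C_mul_le _ _).trans (by simp [Nat.sub_le])

lemma pPoly_coeff_self (m : ℕ) (hm : 0 < m) (j : ℕ) :
    (pPoly m (j : ℤ)).coeff j = ((Nat.factorial j : ℂ))⁻¹ := by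
  rw [pPoly_natCast, Polynomial.finset_sum_coeff]
  rw [Finset.sum_eq_single 0]
  · simp
  · intro i hi hne
    have him : i * m ≤ j :=
      (Nat.mul_le_mul_right m (Nat.le_of_lt_succ (Finset.mem_range.1 hi))).trans
        (Nat.div_mul_le_self j m)
    have h1 : 1 ≤ i * m := Nat.one_le_iff_ne_zero.2 (by positivity)
    have : j - i * m ≠ j := by omega
    simp [mul_assoc, Polynomial.coeff_C_mul, Polynomial.coeff_X_pow, Ne.symm this]
  · intro h; simp at h

lemma pPoly_resid (m : ℕ) (j : ℤ) (e : ℕ) (h : (pPoly m j).coeff e ≠ 0) :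
    (m : ℤ) ∣ j - e := by
  rcases lt_or_ge j 0 with hj | hj
  · rw [pPoly_neg m hj] at h; simp at h
  · lift j to ℕ using hj
    rw [pPoly_natCast, Polynomial.finset_sum_coeff] at h
    obtain ⟨i, hi, hne⟩ := Finset.exists_ne_zero_of_sum_ne_zero h
    have him : i * m ≤ j :=
      (Nat.mul_le_mul_right m (Nat.le_of_lt_succ (Finset.mem_range.1 hi))).trans
        (Nat.div_mul_le_self j m)
    have he : e = j - i * m := by
      by_contra hc
      simp [mul_assoc, Polynomial.coeff_C_mul, Polynomial.coeff_X_pow, hc] at hne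
    refine ⟨i, ?_⟩
    subst he
    push_cast [Nat.cast_sub him]
    ring

/-- support of `P` lies in residue class `r` mod `m`. -/
def Resid (m : ℕ) (r : ℤ) (P : Polynomial ℂ) : Prop :=
  ∀ e : ℕ, P.coeff e ≠ 0 → (m : ℤ) ∣ r - e

lemma resid_congr {m : ℕ} {r r' : ℤ} {P : Polynomial ℂ} (h : (m : ℤ) ∣ r - r')
    (hP : Resid m r P) : Resid m r' P := fun e he => by
  have h1 := dvd_sub (hP e he) h
  have h2 : r - ↑e - (r - r') = r' - e := by ring
  rwa [h2] at h1

lemma resid_mul {m : ℕ} {r s : ℤ} {P Q : Polynomial ℂ} (hP : Resid m r P)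
    (hQ : Resid m s Q) : Resid m (r + s) (P * Q) := by
  intro e he
  rw [Polynomial.coeff_mul] at he
  obtain ⟨⟨x, y⟩, hxy, hne⟩ := Finset.exists_ne_zero_of_sum_ne_zero he
  have hx : P.coeff x ≠ 0 := fun h => hne (by simp [h])
  have hy : Q.coeff y ≠ 0 := fun h => hne (by simp [h])
  have hexy : x + y = e := Finset.HasAntidiagonal.mem_antidiagonal.1 hxy
  have h1 := dvd_add (hP x hx) (hQ y hy)
  have h2 : r - ↑x + (s - ↑y) = r + s - ↑e := by rw [← hexy]; push_cast; ring
  rwa [h2] at h1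

lemma resid_prod {m : ℕ} {ι : Type*} (s : Finset ι) (f : ι → Polynomial ℂ) (r : ι → ℤ)
    (h : ∀ i ∈ s, Resid m (r i) (f i)) :
    Resid m (∑ i ∈ s, r i) (∏ i ∈ s, f i) := by
  induction s using Finset.cons_induction with
  | empty =>
    intro e he
    have he0 : e = 0 := by
      by_contra hne
      simp [Polynomial.coeff_one, hne] at he
    subst he0; simp
  | cons a t ha ih =>
    rw [Finset.prod_cons, Finset.sum_cons]
    exact resid_mul (h a (Finset.mem_cons_self a t))
      (ih (fun i hi => h i (Finset.mem_cons_of_mem hi)))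

lemma resid_sum {m : ℕ} {ι : Type*} {r : ℤ} (s : Finset ι) (f : ι → Polynomial ℂ)
    (h : ∀ i ∈ s, Resid m r (f i)) : Resid m r (∑ i ∈ s, f i) := by
  intro e he
  rw [Polynomial.finset_sum_coeff] at he
  obtain ⟨i, hi, hne⟩ := Finset.exists_ne_zero_of_sum_ne_zero he
  exact h i hi e hne

lemma resid_zsmul {m : ℕ} {r : ℤ} {P : Polynomial ℂ} (z : ℤˣ) (hP : Resid m r P) :
    Resid m r ((z : ℤ) • P) := by
  intro e he
  apply hP
  intro h
  rw [Polynomial.coeff_smul, h, smul_zero] at he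
  exact he rfl

lemma resid_Cmul {m : ℕ} {r : ℤ} {c : ℂ} {P : Polynomial ℂ} (hP : Resid m r P) :
    Resid m r (Polynomial.C c * P) := by
  intro e he
  apply hP
  intro h
  rw [Polynomial.coeff_C_mul, h, mul_zero] at he
  exact he rfl

lemma coeff_prod_at {ι : Type*} (s : Finset ι) (f : ι → Polynomial ℂ) (d : ι → ℕ)
    (h : ∀ i ∈ s, (f i).natDegree ≤ d i) :
    (∏ i ∈ s, f i).coeff (∑ i ∈ s, d i) = ∏ i ∈ s, (f i).coeff (d i) := by
  induction s using Finset.cons_induction with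
  | empty => simp
  | cons a t ha ih =>
    rw [Finset.prod_cons, Finset.sum_cons, Polynomial.coeff_mul_add_eq_of_natDegree_le
      (h a (Finset.mem_cons_self a t))
      ((Polynomial.natDegree_prod_le t f).trans (Finset.sum_le_sum
        (fun i hi => h i (Finset.mem_cons_of_mem hi)))),
      ih (fun i hi => h i (Finset.mem_cons_of_mem hi)), Finset.prod_cons]

/-- the leading-coefficient matrix -/
noncomputable def Lmat (k l N : ℕ) : Matrix (Fin N) (Fin N) ℂ :=
  Matrix.of fun i j : Fin N =>
    if (i : ℕ) ≤ k * (j : ℕ) + l then (((k * (j : ℕ) + l - i).factorial : ℂ))⁻¹ else 0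

lemma Lmat_apply (k l N : ℕ) (i j : Fin N) :
    Lmat k l N i j = ((Nat.descFactorial (k * (j : ℕ) + l) (i : ℕ) : ℂ)) *
      (((k * (j : ℕ) + l).factorial : ℂ))⁻¹ := by
  rw [Lmat, Matrix.of_apply]
  rcases le_or_gt (i : ℕ) (k * (j : ℕ) + l) with h | h
  · rw [if_pos h]
    have hfac : (k * (j : ℕ) + l).factorial =
        Nat.descFactorial (k * (j : ℕ) + l) (i : ℕ) * (k * (j : ℕ) + l - i).factorial := by
      have hh := Nat.factorial_mul_descFactorial h
      rw [← hh]; ring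
    have h1 : ((k * (j : ℕ) + l - (i:ℕ)).factorial : ℂ) ≠ 0 := Nat.cast_ne_zero.2 (Nat.factorial_ne_zero _)
    have h2 : (((k * (j : ℕ) + l).factorial : ℂ)) ≠ 0 := Nat.cast_ne_zero.2 (Nat.factorial_ne_zero _)
    have h3 : ((Nat.descFactorial (k * (j : ℕ) + l) (i : ℕ) : ℕ) : ℂ) ≠ 0 := by
      rw [Nat.cast_ne_zero]
      intro h0
      exact absurd (Nat.descFactorial_eq_zero_iff_lt.1 h0) (not_lt.2 h)
    field_simp [hfac]
    rw [hfac]; push_cast; ring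
  · rw [if_neg (not_le.2 h), Nat.descFactorial_eq_zero_iff_lt.2 h]
    simp

lemma Lmat_det (k l N : ℕ) (hN : 0 < N) :
    (Lmat k l N).det =
      (∏ j : Fin N, (((k * (j : ℕ) + l).factorial : ℂ))⁻¹) *
        ((k : ℂ) ^ (N * (N - 1) / 2) * ∏ i ∈ Finset.range N, ((i.factorial : ℂ))) := by
  obtain ⟨n, rfl⟩ : ∃ n, N = n + 1 := ⟨N - 1, by omega⟩
  have h1 : (Lmat k l (n+1)).det =
      (∏ j : Fin (n+1), (((k * (j : ℕ) + l).factorial : ℂ))⁻¹) *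
        (Matrix.of fun i j : Fin (n+1) =>
          ((Nat.descFactorial (k * (j : ℕ) + l) (i : ℕ) : ℕ) : ℂ)).det := by
    rw [← Matrix.det_mul_row (fun j : Fin (n+1) => (((k * (j : ℕ) + l).factorial : ℂ))⁻¹)]
    congr 1
    ext i j
    rw [Matrix.of_apply, Lmat_apply, mul_comm]
    rfl
  have h2 : (Matrix.of fun i j : Fin (n+1) =>
      ((Nat.descFactorial (k * (j : ℕ) + l) (i : ℕ) : ℕ) : ℂ)).det =
      (Matrix.vandermonde (fun j : Fin (n+1) => ((k * (j : ℕ) + l : ℕ) : ℂ))).det := by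
    rw [← Matrix.det_transpose]
    have ht : (Matrix.of fun i j : Fin (n+1) =>
        ((Nat.descFactorial (k * (j : ℕ) + l) (i : ℕ) : ℕ) : ℂ)).transpose =
        Matrix.of (fun i j : Fin (n+1) =>
          (descPochhammer ℂ (j : ℕ)).eval (((k * (i : ℕ) + l : ℕ) : ℂ))) := by
      ext i j
      simp only [Matrix.transpose_apply, Matrix.of_apply]
      exact (descPochhammer_eval_eq_descFactorial ℂ _ _).symm
    rw [ht, ← Matrix.det_eval_matrixOfPolynomials_eq_det_vandermonde _ _
      (fun i => descPochhammer_natDegree ℂ i) (fun i => monic_descPochhammer ℂ i)]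
  have h3 : (Matrix.vandermonde (fun j : Fin (n+1) => ((k * (j : ℕ) + l : ℕ) : ℂ))).det =
      (k : ℂ) ^ ((n+1) * n / 2) * ∏ i ∈ Finset.range (n+1), ((i.factorial : ℂ)) := by
    rw [Matrix.det_vandermonde]
    have step1 : ∀ i : Fin (n+1), ∏ j ∈ Finset.Ioi i,
        (((k * (j : ℕ) + l : ℕ) : ℂ) - ((k * (i : ℕ) + l : ℕ) : ℂ)) =
        (k : ℂ) ^ (Finset.Ioi i).card * ∏ j ∈ Finset.Ioi i, (((j : ℕ) : ℂ) - ((i : ℕ) : ℂ)) := by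
      intro i
      rw [← Finset.prod_const, ← Finset.prod_mul_distrib]
      exact Finset.prod_congr rfl (fun j hj => by push_cast; ring)
    rw [Finset.prod_congr rfl (fun i _ => step1 i), Finset.prod_mul_distrib]
    congr 1
    · rw [Finset.prod_pow_eq_pow_sum]
      congr 1
      have hc : ∀ i : Fin (n+1), (Finset.Ioi i).card = n - (i : ℕ) := by
        intro i; rw [Fin.card_Ioi]; omega
      rw [Finset.sum_congr rfl (fun i _ => hc i),
        Fin.sum_univ_eq_sum_range (fun i => n - i) (n+1)]
      have := Finset.sum_range_reflect (fun i => i) (n+1)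
      simp only [Nat.succ_sub_one] at this ⊢
      rw [this, Finset.sum_range_id]
      simp
    · have hv := Matrix.det_vandermonde_id_eq_superFactorial (R := ℂ) n
      rw [Matrix.det_vandermonde] at hv
      rw [hv, ← Nat.prod_range_succ_factorial n]
      push_cast
      rfl
  rw [h1, h2, h3]
  norm_num

/-- For positive integers `m, k, l, N` with `m > 1`, `k ∤ m` and `1 ≤ l < k`, letting
`Γ = N((k-1)(N-1)+2l)/2` and `Γ₀` be the multiplicity of `0` as a root of `W_N^{[m,k,l]}`,
we have `m ∣ Γ - Γ₀`, and `W_N^{[m,k,l]}(z) = z^{Γ₀} · Q(z^m)` for a monic polynomial `Q`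
with nonzero constant term. -/
theorem wronskianHermite_factorization
    (m k l N : ℕ) (hm : 1 < m) (hk : ¬ k ∣ m) (hl : 1 ≤ l) (hlk : l < k) (hN : 0 < N) :
    (m : ℤ) ∣ ((N * ((k - 1) * (N - 1) + 2 * l) / 2 : ℕ) : ℤ)
        - ((WPoly m k l N).rootMultiplicity 0 : ℤ) ∧
      ∃ Q : Polynomial ℂ, Q.Monic ∧ Q.eval 0 ≠ 0 ∧
        ∀ z : ℂ, (WPoly m k l N).eval z =
          z ^ ((WPoly m k l N).rootMultiplicity 0) * Q.eval (z ^ m) := by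
  classical
  have hm0 : 0 < m := by omega
  have hk1 : 1 ≤ k := hl.trans hlk.le
  set S : ℕ := ∑ i ∈ Finset.range N, i with hS
  set G : ℕ := (k - 1) * S + N * l with hG
  set M : Matrix (Fin N) (Fin N) (Polynomial ℂ) :=
    Matrix.of (fun i j : Fin N =>
      pPoly m (((k * (j : ℕ) + l : ℕ) : ℤ) - ((i : ℕ) : ℤ))) with hMdef
  have hWdef : WPoly m k l N = Polynomial.C (cConst k l N) * M.det := rfl
  have hS2 : S * 2 = N * (N - 1) := Finset.sum_range_id_mul_two N
  have hΓ : N * ((k - 1) * (N - 1) + 2 * l) / 2 = G := by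
    have h2G : N * ((k - 1) * (N - 1) + 2 * l) = 2 * G := by
      calc N * ((k - 1) * (N - 1) + 2 * l) = (k - 1) * (N * (N - 1)) + 2 * (N * l) := by ring
        _ = (k - 1) * (S * 2) + 2 * (N * l) := by rw [hS2]
        _ = 2 * G := by rw [hG]; ring
    omega
  have hfinsum : ∑ j : Fin N, ((j : ℕ) : ℤ) = (S : ℤ) := by
    rw [hS]; push_cast; rw [Fin.sum_univ_eq_sum_range (fun i => (i : ℤ)) N]
  have hsum : ∀ σ : Equiv.Perm (Fin N),
      ∑ j : Fin N, (((k * (j : ℕ) + l : ℕ) : ℤ) - ((σ j : ℕ) : ℤ)) = (G : ℤ) := by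
    intro σ
    have h1 : ∑ j : Fin N, ((σ j : ℕ) : ℤ) = ∑ j : Fin N, ((j : ℕ) : ℤ) :=
      Equiv.sum_comp σ (fun j => ((j : ℕ) : ℤ))
    rw [Finset.sum_sub_distrib, h1, hfinsum]
    have h3 : ∑ j : Fin N, ((k * (j : ℕ) + l : ℕ) : ℤ) = (k : ℤ) * (S : ℤ) + N * l := by
      push_cast
      rw [Finset.sum_add_distrib, ← Finset.mul_sum, hfinsum]
      simp [Finset.card_univ, mul_comm]
    rw [h3, hG]
    push_cast [Nat.cast_sub hk1]
    ring
  have hMentry : ∀ i j : Fin N, (i : ℕ) ≤ k * (j : ℕ) + l →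
      M i j = pPoly m (((k * (j : ℕ) + l - (i : ℕ) : ℕ)) : ℤ) := by
    intro i j h
    rw [hMdef]
    simp only [Matrix.of_apply]
    congr 1
    omega
  have hresM : ∀ i j : Fin N,
      Resid m (((k * (j : ℕ) + l : ℕ) : ℤ) - ((i : ℕ) : ℤ)) (M i j) := by
    intro i j
    intro e he
    exact pPoly_resid m _ e he
  have hcast : ∀ σ : Equiv.Perm (Fin N),
      ((Equiv.Perm.sign σ : ℤ) : Polynomial ℂ) =
        Polynomial.C (((Equiv.Perm.sign σ : ℤ) : ℂ)) :=
    fun σ => (map_intCast (Polynomial.C : ℂ →+* Polynomial ℂ) _).symm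
  have hresdet : Resid m (G : ℤ) M.det := by
    rw [Matrix.det_apply']
    apply resid_sum
    intro σ _
    rw [hcast σ]
    apply resid_Cmul
    have := resid_prod Finset.univ (fun j => M (σ j) j)
      (fun j => ((k * (j : ℕ) + l : ℕ) : ℤ) - ((σ j : ℕ) : ℤ))
      (fun j _ => hresM (σ j) j)
    rwa [hsum σ] at this
  -- coefficient of det at G
  have hprodterm : ∀ σ : Equiv.Perm (Fin N),
      ((∏ j : Fin N, M (σ j) j).coeff G = ∏ j : Fin N, Lmat k l N (σ j) j) ∧
      (∏ j : Fin N, M (σ j) j).natDegree ≤ G := by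
    intro σ
    by_cases hgood : ∀ j : Fin N, (σ j : ℕ) ≤ k * (j : ℕ) + l
    · have hdsum : ∑ j : Fin N, (k * (j : ℕ) + l - (σ j : ℕ)) = G := by
        have hcs : ∀ j : Fin N, ((k * (j : ℕ) + l - (σ j : ℕ) : ℕ) : ℤ) =
            ((k * (j : ℕ) + l : ℕ) : ℤ) - ((σ j : ℕ) : ℤ) := by
          intro j; have := hgood j; omega
        have h1 : ((∑ j : Fin N, (k * (j : ℕ) + l - (σ j : ℕ)) : ℕ) : ℤ) = (G : ℤ) := by
          rw [Nat.cast_sum, Finset.sum_congr rfl (fun j _ => hcs j)]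
          exact hsum σ
        exact_mod_cast h1
      have hdegj : ∀ j : Fin N, (M (σ j) j).natDegree ≤ k * (j : ℕ) + l - (σ j : ℕ) := by
        intro j
        rw [hMentry (σ j) j (hgood j)]
        exact pPoly_natDegree_le m _
      constructor
      · rw [← hdsum, coeff_prod_at Finset.univ _ _ (fun j _ => hdegj j)]
        apply Finset.prod_congr rfl
        intro j _
        rw [hMentry (σ j) j (hgood j), pPoly_coeff_self m hm0]
        rw [Lmat]
        simp only [Matrix.of_apply, if_pos (hgood j)]
      · calc (∏ j : Fin N, M (σ j) j).natDegree
            ≤ ∑ j : Fin N, (M (σ j) j).natDegree := Polynomial.natDegree_prod_le _ _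
          _ ≤ ∑ j : Fin N, (k * (j : ℕ) + l - (σ j : ℕ)) := Finset.sum_le_sum (fun j _ => hdegj j)
          _ = G := hdsum
    · push_neg at hgood
      obtain ⟨j0, hj0⟩ := hgood
      have hMzero : M (σ j0) j0 = 0 := by
        rw [hMdef]
        simp only [Matrix.of_apply]
        apply pPoly_neg
        omega
      have hz : (∏ j : Fin N, M (σ j) j) = 0 :=
        Finset.prod_eq_zero (Finset.mem_univ j0) hMzero
      rw [hz]
      constructor
      · rw [Polynomial.coeff_zero, eq_comm]
        apply Finset.prod_eq_zero (Finset.mem_univ j0)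
        rw [Lmat]
        simp only [Matrix.of_apply, if_neg (not_le.2 hj0)]
      · simp
  have hcoeffdet : M.det.coeff G = (Lmat k l N).det := by
    rw [Matrix.det_apply', Matrix.det_apply' (Lmat k l N), Polynomial.finset_sum_coeff]
    apply Finset.sum_congr rfl
    intro σ _
    rw [hcast σ, Polynomial.coeff_C_mul, (hprodterm σ).1]
  have hdegdet : M.det.natDegree ≤ G := by
    rw [Matrix.det_apply']
    apply Polynomial.natDegree_sum_le_of_forall_le
    intro σ _
    refine Polynomial.natDegree_mul_le.trans ?_
    rw [Polynomial.natDegree_intCast]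
    simpa using (hprodterm σ).2
  have hcoeffW : (WPoly m k l N).coeff G = 1 := by
    rw [hWdef, Polynomial.coeff_C_mul, hcoeffdet, Lmat_det k l N hN, cConst]
    have hkne : (k : ℂ) ≠ 0 := Nat.cast_ne_zero.2 (by omega)
    have hEne : ((k : ℂ) ^ (N * (N - 1) / 2)) ≠ 0 := pow_ne_zero _ hkne
    have hprod1 : (∏ i ∈ Finset.range N, (((k * i + l).factorial : ℂ) / (i.factorial : ℂ))) *
        ((∏ j ∈ Finset.range N, (((k * j + l).factorial : ℂ))⁻¹) *
          (∏ i ∈ Finset.range N, ((i.factorial : ℂ)))) = 1 := by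
      rw [← Finset.prod_mul_distrib, ← Finset.prod_mul_distrib]
      apply Finset.prod_eq_one
      intro i _
      have h1 : (((k * i + l).factorial : ℕ) : ℂ) ≠ 0 :=
        Nat.cast_ne_zero.2 (Nat.factorial_ne_zero _)
      have h2 : ((i.factorial : ℕ) : ℂ) ≠ 0 := Nat.cast_ne_zero.2 (Nat.factorial_ne_zero _)
      field_simp
    rw [Fin.prod_univ_eq_prod_range (fun j => (((k * j + l).factorial : ℂ))⁻¹) N]
    calc ((k : ℂ) ^ (N * (N - 1) / 2))⁻¹ *
          (∏ i ∈ Finset.range N, (((k * i + l).factorial : ℂ) / (i.factorial : ℂ))) *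
          ((∏ j ∈ Finset.range N, (((k * j + l).factorial : ℂ))⁻¹) *
            ((k : ℂ) ^ (N * (N - 1) / 2) * (∏ i ∈ Finset.range N, ((i.factorial : ℂ)))))
        = (((k : ℂ) ^ (N * (N - 1) / 2))⁻¹ * ((k : ℂ) ^ (N * (N - 1) / 2))) *
            ((∏ i ∈ Finset.range N, (((k * i + l).factorial : ℂ) / (i.factorial : ℂ))) *
              ((∏ j ∈ Finset.range N, (((k * j + l).factorial : ℂ))⁻¹) *
                (∏ i ∈ Finset.range N, ((i.factorial : ℂ))))) := by ring
      _ = 1 := by rw [inv_mul_cancel₀ hEne, hprod1, one_mul]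
  have hdegW : (WPoly m k l N).natDegree ≤ G := by
    rw [hWdef]
    exact (Polynomial.natDegree_C_mul_le _ _).trans hdegdet
  have hmonic : (WPoly m k l N).Monic :=
    Polynomial.monic_of_degree_le G (Polynomial.natDegree_le_iff_degree_le.1 hdegW) hcoeffW
  have hW0 : WPoly m k l N ≠ 0 := hmonic.ne_zero
  have hndeg : (WPoly m k l N).natDegree = G :=
    le_antisymm hdegW (Polynomial.le_natDegree_of_ne_zero (by rw [hcoeffW]; exact one_ne_zero))
  have hresW : Resid m (G : ℤ) (WPoly m k l N) := by
    rw [hWdef]; exact resid_Cmul hresdet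
  set Γ0 : ℕ := (WPoly m k l N).natTrailingDegree with hΓ0
  have hrm : (WPoly m k l N).rootMultiplicity 0 = Γ0 :=
    Polynomial.rootMultiplicity_eq_natTrailingDegree'
  have htc : (WPoly m k l N).coeff Γ0 ≠ 0 :=
    Polynomial.trailingCoeff_nonzero_iff_nonzero.mpr hW0
  have hdvd : (m : ℤ) ∣ (G : ℤ) - (Γ0 : ℤ) := hresW Γ0 htc
  have hΓ0le : Γ0 ≤ G := hndeg ▸ Polynomial.natTrailingDegree_le_natDegree _
  constructor
  · rw [hΓ, hrm]; exact hdvd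
  · obtain ⟨u, hu⟩ : ∃ u, G = Γ0 + m * u := by
      have h1 : (m : ℤ) ∣ ((G - Γ0 : ℕ) : ℤ) := by rwa [Nat.cast_sub hΓ0le]
      obtain ⟨u, hu'⟩ := Int.ofNat_dvd.mp h1
      exact ⟨u, by omega⟩
    set Q : Polynomial ℂ := ∑ t ∈ Finset.range (u + 1),
      Polynomial.C ((WPoly m k l N).coeff (Γ0 + m * t)) * Polynomial.X ^ t with hQ
    have hQcoeff : ∀ t, Q.coeff t =
        if t ≤ u then (WPoly m k l N).coeff (Γ0 + m * t) else 0 := by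
      intro t
      rw [hQ, Polynomial.finset_sum_coeff]
      simp only [Polynomial.coeff_C_mul, Polynomial.coeff_X_pow, mul_ite, mul_one, mul_zero]
      rw [Finset.sum_ite_eq (Finset.range (u + 1)) t
        (fun s => (WPoly m k l N).coeff (Γ0 + m * s))]
      simp [Nat.lt_succ_iff]
    have hQu : Q.coeff u = 1 := by
      rw [hQcoeff, if_pos le_rfl, ← hu, hcoeffW]
    have hQdeg : Q.natDegree ≤ u := by
      rw [hQ]
      apply Polynomial.natDegree_sum_le_of_forall_le
      intro t ht
      refine (Polynomial.natDegree_C_mul_le _ _).trans ?_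
      rw [Polynomial.natDegree_X_pow]
      exact Nat.lt_succ_iff.mp (Finset.mem_range.1 ht)
    have hQmonic : Q.Monic :=
      Polynomial.monic_of_degree_le u (Polynomial.natDegree_le_iff_degree_le.1 hQdeg) hQu
    refine ⟨Q, hQmonic, ?_, ?_⟩
    · rw [← Polynomial.coeff_zero_eq_eval_zero, hQcoeff, if_pos (Nat.zero_le u)]
      simpa using htc
    · intro z
      rw [hrm]
      have hRHS : z ^ Γ0 * Q.eval (z ^ m) = ∑ t ∈ Finset.range (u + 1),
          (WPoly m k l N).coeff (Γ0 + m * t) * z ^ (Γ0 + m * t) := by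
        rw [hQ, Polynomial.eval_finset_sum, Finset.mul_sum]
        apply Finset.sum_congr rfl
        intro t _
        rw [Polynomial.eval_mul, Polynomial.eval_C, Polynomial.eval_pow, Polynomial.eval_X,
          pow_add, pow_mul]
        ring
      rw [hRHS]
      have hinj : ∀ x ∈ Finset.range (u + 1), ∀ y ∈ Finset.range (u + 1),
          Γ0 + m * x = Γ0 + m * y → x = y := by
        intro x _ y _ h
        have : m * x = m * y := by omega
        exact Nat.eq_of_mul_eq_mul_left hm0 this
      have himg : ∑ e ∈ (Finset.range (u + 1)).image (fun t => Γ0 + m * t),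
          (WPoly m k l N).coeff e * z ^ e = ∑ t ∈ Finset.range (u + 1),
          (WPoly m k l N).coeff (Γ0 + m * t) * z ^ (Γ0 + m * t) := Finset.sum_image hinj
      rw [← himg, Polynomial.eval_eq_sum_range, hndeg]
      refine (Finset.sum_subset ?_ ?_).symm
      · intro e he
        rw [Finset.mem_image] at he
        obtain ⟨t, ht, rfl⟩ := he
        rw [Finset.mem_range] at ht ⊢
        have : m * t ≤ m * u := Nat.mul_le_mul_left m (Nat.lt_succ_iff.mp ht)
        omega
      · intro e he hne
        rw [Finset.mem_range] at he
        have hce : (WPoly m k l N).coeff e = 0 := by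
          by_contra hc
          have h1 : (m : ℤ) ∣ (G : ℤ) - (e : ℤ) := hresW e hc
          have h2 : Γ0 ≤ e := Polynomial.natTrailingDegree_le_of_ne_zero hc
          have h3 : (m : ℤ) ∣ ((e - Γ0 : ℕ) : ℤ) := by
            have := dvd_sub hdvd h1
            rw [Nat.cast_sub h2]
            have heq : (G : ℤ) - (Γ0 : ℤ) - ((G : ℤ) - (e : ℤ)) = (e : ℤ) - Γ0 := by ring
            rwa [heq] at this
          obtain ⟨t, ht⟩ := Int.ofNat_dvd.mp h3
          have het : e = Γ0 + m * t := by omega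
          have htu : t ≤ u := by
            have h4 : Γ0 + m * t ≤ Γ0 + m * u := by omega
            have h5 : m * t ≤ m * u := by omega
            exact Nat.le_of_mul_le_mul_left h5 hm0
          apply hne
          rw [Finset.mem_image]
          exact ⟨t, Finset.mem_range.2 (Nat.lt_succ_of_le htu), het.symm⟩
        rw [hce, zero_mul]
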